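/- There is a constant κ > 0 depending only on M, a_lower, a_upper, Q, N such that every admissible Cantor set X has logarithmic capacity Cap(X) ≥ κ. Specifically, choosing h > 0 small with N a_lower^h > 1, the h-conformal measure ν_h has uniformly bounded logarithmic potential: U_{ν_h}(z) = ∫ log(1/|z-w|) dν_h(w) ≤ I_0 < ∞ for all z ∈ X, where I_0 depends only on the construction parameters; hence Cap(X) ≥ exp(-I_0). -/

import Mathlib

open scoped BigOperators
open MeasureTheory

/-- The logarithmic potential of a measure `μ` on `ℂ` at a point `z`. -/
noncomputable def logPotential (μ : Measure ℂ) (z : ℂ) : ℝ :=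
  ∫ w, Real.log (1 / ‖z - w‖) ∂μ

/-- The logarithmic energy of a measure on `ℂ`. -/
noncomputable def logEnergy (μ : Measure ℂ) : ℝ :=
  ∫ z, logPotential μ z ∂μ

/-- The logarithmic capacity of a set `X ⊆ ℂ`: the supremum of `exp(-I(μ))`
over probability measures supported on `X`. -/
noncomputable def logCapacity (X : Set ℂ) : ℝ :=
  sSup {c : ℝ | ∃ μ : Measure ℂ, IsProbabilityMeasure μ ∧ μ Xᶜ = 0 ∧
    c = Real.exp (-(logEnergy μ))}

private lemma chain_subset {N : ℕ} (Q' : ∀ n : ℕ, (Fin n → Fin N) → Set ℂ)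
    (hnest : ∀ n (I : Fin (n + 1) → Fin N), Q' (n + 1) I ⊆ Q' n (Fin.init I)) :
    ∀ k j (hj : j ≤ k) (I : Fin k → Fin N),
      Q' k I ⊆ Q' j (fun i => I (Fin.castLE hj i)) := by
  intro k
  induction k with
  | zero =>
      intro j hj I x hx
      have hj0 : j = 0 := Nat.le_zero.mp hj
      subst hj0
      have heq : (fun i : Fin 0 => I (Fin.castLE hj i)) = I := funext fun i => i.elim0
      rw [heq]; exact hx
  | succ k ih =>
      intro j hj I
      rcases Nat.lt_or_ge j (k + 1) with hlt | hge
      · have hjk : j ≤ k := Nat.lt_succ_iff.mp hlt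
        intro x hx
        have h1 : x ∈ Q' k (Fin.init I) := hnest k I hx
        have h2 := ih j hjk (Fin.init I) h1
        have heq : (fun i : Fin j => Fin.init I (Fin.castLE hjk i))
            = fun i : Fin j => I (Fin.castLE hj i) := by
          funext i
          show I ((Fin.castLE hjk i).castSucc) = I (Fin.castLE hj i)
          exact congrArg I (Fin.ext rfl)
        rwa [heq] at h2
      · have hjeq : j = k + 1 := le_antisymm hj hge
        subst hjeq
        intro x hx
        have heq : (fun i : Fin (k + 1) => I (Fin.castLE hj i)) = I :=
          funext fun i => congrArg I (Fin.ext rfl)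
        rw [heq]; exact hx

private lemma setLIntegral_le_of_bound {ν : Measure ℂ} {s : Set ℂ} (hs : MeasurableSet s)
    (g : ℂ → ENNReal) (c : ENNReal) (hg : ∀ w ∈ s, g w ≤ c) :
    ∫⁻ w in s, g w ∂ν ≤ c * ν s := by
  calc ∫⁻ w in s, g w ∂ν ≤ ∫⁻ _ in s, c ∂ν := setLIntegral_mono' hs hg
    _ = c * ν s := setLIntegral_const s c

theorem capacity_uniformly_bounded_below
    (N : ℕ) (hN : 2 ≤ N) (al au csep : ℝ)
    (hal : 0 < al) (halau : al ≤ au) (hau : au < 1) (hcsep : 0 < csep)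
    (h : ℝ) (hh : 0 < h) (hP : 1 < (N : ℝ) * al ^ h) :
    ∃ κ I₀ : ℝ, 0 < κ ∧
      ∀ (X : Set ℂ) (Q' : ∀ n : ℕ, (Fin n → Fin N) → Set ℂ) (ν : Measure ℂ),
        IsCompact X → X.Nonempty →
        (∀ n (I : Fin n → Fin N),
          al ^ n ≤ Metric.diam (Q' n I) ∧ Metric.diam (Q' n I) ≤ au ^ n) →
        (∀ n (I : Fin (n + 1) → Fin N), Q' (n + 1) I ⊆ Q' n (Fin.init I)) →
        (∀ n (I : Fin (n + 1) → Fin N) (z w : ℂ), z ∈ Q' (n + 1) I →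
          w ∈ Q' n (Fin.init I) → w ∉ Q' (n + 1) I →
          csep * Metric.diam (Q' (n + 1) I) ≤ dist z w) →
        (∀ n, X ⊆ ⋃ I : Fin n → Fin N, Q' n I) →
        IsProbabilityMeasure ν → ν Xᶜ = 0 →
        (∀ n (I : Fin n → Fin N), ν (Q' n I) ≤
          ENNReal.ofReal (Metric.diam (Q' n I) ^ h / ((N : ℝ) * al ^ h) ^ n)) →
        (∀ z ∈ X, logPotential ν z ≤ I₀) ∧
          Real.exp (-I₀) ≤ logCapacity X ∧ κ ≤ logCapacity X := by
  classical
  have hau0 : 0 < au := lt_of_lt_of_le hal halau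
  have hal1 : al < 1 := lt_of_le_of_lt halau hau
  set A : ℝ := |Real.log csep| with hA
  set L : ℝ := -Real.log al with hL
  set β : ℝ := au ^ h with hβ
  have hA0 : 0 ≤ A := abs_nonneg _
  have hL0 : 0 < L := by
    have := Real.log_neg hal hal1
    simp only [hL]; linarith
  have hβ0 : 0 ≤ β := Real.rpow_nonneg hau0.le h
  have hβ1 : β < 1 := Real.rpow_lt_one hau0.le hau hh
  have hCnn : ∀ k : ℕ, 0 ≤ (A + ((k : ℝ) + 1) * L) * β ^ k := by
    intro k
    have : 0 ≤ ((k : ℝ) + 1) * L := by positivity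
    have : 0 ≤ A + ((k : ℝ) + 1) * L := by linarith
    exact mul_nonneg this (pow_nonneg hβ0 k)
  have hsumm : Summable (fun k : ℕ => (A + ((k : ℝ) + 1) * L) * β ^ k) := by
    have h1 : Summable (fun k : ℕ => A * β ^ k) :=
      (summable_geometric_of_lt_one hβ0 hβ1).mul_left A
    have h2 : Summable (fun k : ℕ => (k : ℝ) * β ^ k) := by
      have := summable_pow_mul_geometric_of_norm_lt_one (R := ℝ) 1
        (r := β) (by rwa [Real.norm_of_nonneg hβ0])
      simpa using this
    have h3 : Summable (fun k : ℕ => L * ((k : ℝ) * β ^ k)) := h2.mul_left L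
    have h4 : Summable (fun k : ℕ => L * β ^ k) :=
      (summable_geometric_of_lt_one hβ0 hβ1).mul_left L
    refine ((h1.add h3).add h4).congr fun k => ?_
    ring
  set S : ℝ := ∑' k : ℕ, (A + ((k : ℝ) + 1) * L) * β ^ k with hS
  have hS0 : 0 ≤ S := tsum_nonneg hCnn
  have hI₀0 : 0 ≤ A + S := by linarith
  -- an auxiliary real inequality used for the measure bound
  have hpowineq : ∀ (k : ℕ) (d : ℝ), 0 ≤ d → d ≤ au ^ k →
      d ^ h / ((N : ℝ) * al ^ h) ^ k ≤ β ^ k := by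
    intro k d hd0 hdk
    have e1 : ((au : ℝ) ^ k) ^ h = β ^ k := by
      rw [hβ, ← Real.rpow_natCast au k, ← Real.rpow_natCast (au ^ h) k,
        ← Real.rpow_mul hau0.le, ← Real.rpow_mul hau0.le, mul_comm]
    have h1 : d ^ h ≤ β ^ k := by
      rw [← e1]; exact Real.rpow_le_rpow hd0 hdk hh.le
    have hone : (1 : ℝ) ≤ ((N : ℝ) * al ^ h) ^ k := one_le_pow₀ hP.le
    calc d ^ h / ((N : ℝ) * al ^ h) ^ k ≤ d ^ h :=
          div_le_self (Real.rpow_nonneg hd0 h) hone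
      _ ≤ β ^ k := h1
  refine ⟨Real.exp (-(A + S)), A + S, Real.exp_pos _, ?_⟩
  intro X Q' ν hXc hXne hdiam hnest hsep hcover hprob hnull hν
  -- basic facts
  have hQbdd : ∀ n I, Bornology.IsBounded (Q' n I) := by
    intro n I
    rw [Metric.isBounded_iff_ediam_ne_top]
    intro htop
    have h1 := (hdiam n I).1
    rw [Metric.diam, htop] at h1
    simp at h1
    exact absurd h1 (not_le.mpr (pow_pos hal n))
  have hXQ0 : ∀ J : Fin 0 → Fin N, X ⊆ Q' 0 J := by
    intro J w hw
    obtain ⟨s, ⟨I, rfl⟩, hws⟩ := hcover 0 hw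
    rwa [Subsingleton.elim J I]
  have habs_le_one : ∀ zz ∈ X, ∀ w ∈ X, ‖zz - w‖ ≤ 1 := by
    intro zz hzz w hw
    have hd : dist zz w ≤ Metric.diam (Q' 0 fun i => i.elim0) :=
      Metric.dist_le_diam_of_mem (hQbdd 0 _) (hXQ0 _ hzz) (hXQ0 _ hw)
    have := (hdiam 0 (fun i => i.elim0)).2
    rw [pow_zero] at this
    rw [← Complex.dist_eq]
    linarith
  have haeX : ∀ᵐ w ∂ν, w ∈ X := by
    rw [MeasureTheory.ae_iff]
    exact hnull
  -- the key measure estimate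
  have hkey : ∀ z ∈ X, ∀ k : ℕ,
      ν (X ∩ Metric.ball z (csep * al ^ k)) ≤ ENNReal.ofReal (β ^ k) := by
    intro z hz k
    obtain ⟨s, ⟨I, rfl⟩, hzI⟩ := hcover k hz
    have hsub : X ∩ Metric.ball z (csep * al ^ k) ⊆ Q' k I := by
      have H : ∀ j (hj : j ≤ k), X ∩ Metric.ball z (csep * al ^ k) ⊆
          Q' j (fun i => I (Fin.castLE hj i)) := by
        intro j
        induction j with
        | zero => exact fun _ w hw => hXQ0 _ hw.1
        | succ j ih =>
            intro hj w hw
            have hj' : j ≤ k := Nat.le_of_succ_le hj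
            by_contra hwn
            have hzin : z ∈ Q' (j + 1) (fun i => I (Fin.castLE hj i)) :=
              chain_subset Q' hnest k (j + 1) hj I hzI
            have hwin : w ∈ Q' j (Fin.init fun i => I (Fin.castLE hj i)) := by
              have hmem := ih hj' hw
              have heq : (Fin.init fun i : Fin (j + 1) => I (Fin.castLE hj i))
                  = fun i : Fin j => I (Fin.castLE hj' i) := by
                funext i
                show I ((Fin.castLE hj i.castSucc)) = I (Fin.castLE hj' i)
                exact congrArg I (Fin.ext rfl)
              rw [heq]; exact hmem
            have hsep' := hsep j _ z w hzin hwin hwn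
            have hd1 : al ^ (j + 1) ≤ Metric.diam (Q' (j + 1) fun i => I (Fin.castLE hj i)) :=
              (hdiam _ _).1
            have hd2 : al ^ k ≤ al ^ (j + 1) :=
              pow_le_pow_of_le_one hal.le hal1.le hj
            have hge : csep * al ^ k ≤ dist z w := by
              calc csep * al ^ k ≤ csep * Metric.diam (Q' (j + 1) fun i => I (Fin.castLE hj i)) := by
                    apply mul_le_mul_of_nonneg_left (hd2.trans hd1) hcsep.le
                _ ≤ dist z w := hsep'
            have hball : dist w z < csep * al ^ k := hw.2
            rw [dist_comm] at hball
            linarith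
      have := H k le_rfl
      have heq : (fun i : Fin k => I (Fin.castLE le_rfl i)) = I :=
        funext fun i => congrArg I (Fin.ext rfl)
      rwa [heq] at this
    calc ν (X ∩ Metric.ball z (csep * al ^ k)) ≤ ν (Q' k I) := measure_mono hsub
      _ ≤ ENNReal.ofReal (Metric.diam (Q' k I) ^ h / ((N : ℝ) * al ^ h) ^ k) := hν k I
      _ ≤ ENNReal.ofReal (β ^ k) := by
          apply ENNReal.ofReal_le_ofReal
          exact hpowineq k _ Metric.diam_nonneg (hdiam k I).2
  -- the potential bound
  have hpot : ∀ z ∈ X, logPotential ν z ≤ A + S := by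
    intro z hz
    set f : ℂ → ℝ := fun w => Real.log (1 / ‖z - w‖) with hf
    set g : ℂ → ENNReal := fun w => ENNReal.ofReal (f w) with hg
    set B : ℕ → Set ℂ := fun m => Metric.ball z (csep * al ^ m) with hB
    set F : ℕ → Set ℂ := fun n =>
      Nat.casesOn n Xᶜ (fun n' =>
        Nat.casesOn n' (X \ B 0) (fun n'' =>
          Nat.casesOn n'' ({z} : Set ℂ) (fun k => (X ∩ B k) \ B (k + 1)))) with hF
    have hFmeas : ∀ n, MeasurableSet (F n) := by
      intro n
      match n with
      | 0 => exact hXc.isClosed.measurableSet.compl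
      | 1 => exact hXc.isClosed.measurableSet.diff Metric.isOpen_ball.measurableSet
      | 2 => exact measurableSet_singleton z
      | (k+3) =>
          exact ((hXc.isClosed.measurableSet.inter Metric.isOpen_ball.measurableSet).diff
            Metric.isOpen_ball.measurableSet)
    have hcoverF : (Set.univ : Set ℂ) ⊆ ⋃ n, F n := by
      intro w _
      rw [Set.mem_iUnion]
      by_cases hwX : w ∈ X
      swap
      · exact ⟨0, hwX⟩
      by_cases hw0 : w ∈ B 0
      swap
      · exact ⟨1, hwX, hw0⟩
      by_cases hwz : w = z
      · exact ⟨2, hwz⟩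
      have hexists : ∃ m, w ∉ B m := by
        have hdpos : 0 < dist w z := dist_pos.mpr hwz
        obtain ⟨m, hm⟩ := exists_pow_lt_of_lt_one (div_pos hdpos hcsep) hal1
        refine ⟨m, fun hmem => ?_⟩
        have h1 : dist w z < csep * al ^ m := hmem
        have h2 : csep * al ^ m < csep * (dist w z / csep) :=
          mul_lt_mul_of_pos_left hm hcsep
        rw [mul_div_cancel₀ _ hcsep.ne'] at h2
        linarith
      have hm := Nat.find_spec hexists
      set m := Nat.find hexists with hmdef
      have hm0 : m ≠ 0 := by
        intro h0
        rw [h0] at hm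
        exact hm hw0
      obtain ⟨k, hk⟩ := Nat.exists_eq_succ_of_ne_zero hm0
      have hwk : w ∈ B k := by
        by_contra hcon
        exact absurd hcon (not_not.mpr (by
          have := Nat.find_min hexists (m := k) (by omega)
          exact not_not.mp (fun hh' => this hh')))
      refine ⟨k + 3, ⟨⟨hwX, hwk⟩, ?_⟩⟩
      have h5 : w ∉ B (k.succ) := hk ▸ hm
      exact h5
    -- piece bounds
    have hu0 : ∫⁻ w in F 0, g w ∂ν = 0 := setLIntegral_measure_zero _ _ hnull
    have hu1 : ∫⁻ w in F 1, g w ∂ν ≤ ENNReal.ofReal A := by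
      have hb : ∀ w ∈ F 1, g w ≤ ENNReal.ofReal A := by
        intro w hw
        have hnb : w ∉ B 0 := hw.2
        have hd : csep ≤ dist w z := by
          have := not_lt.mp (fun hc => hnb (Metric.mem_ball.mpr hc))
          simpa using this
        have hdz : ‖z - w‖ = dist w z := by
          rw [← Complex.dist_eq, dist_comm]
        apply ENNReal.ofReal_le_ofReal
        have hpos : 0 < dist w z := lt_of_lt_of_le hcsep hd
        have h1 : (1 : ℝ) / dist w z ≤ 1 / csep :=
          one_div_le_one_div_of_le hcsep hd
        calc f w = Real.log (1 / dist w z) := by rw [hf]; simp [hdz]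
          _ ≤ Real.log (1 / csep) := Real.log_le_log (by positivity) h1
          _ = -Real.log csep := by rw [one_div, Real.log_inv]
          _ ≤ A := neg_le_abs _
      calc ∫⁻ w in F 1, g w ∂ν ≤ ENNReal.ofReal A * ν (F 1) :=
            setLIntegral_le_of_bound (hFmeas 1) g _ hb
        _ ≤ ENNReal.ofReal A * 1 := mul_le_mul_right prob_le_one _
        _ = ENNReal.ofReal A := mul_one _
    have hu2 : ∫⁻ w in F 2, g w ∂ν = 0 := by
      have hb : ∀ w ∈ F 2, g w ≤ 0 := by
        intro w hw
        have : w = z := hw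
        subst this
        have : f w = 0 := by
          rw [hf]; simp
        rw [hg]
        simp [this]
      have := setLIntegral_le_of_bound (ν := ν) (hFmeas 2) g 0 hb
      rw [zero_mul] at this
      exact le_antisymm this zero_le
    have hu3 : ∀ k : ℕ, ∫⁻ w in F (k + 3), g w ∂ν ≤
        ENNReal.ofReal ((A + ((k : ℝ) + 1) * L) * β ^ k) := by
      intro k
      have hb : ∀ w ∈ F (k + 3), g w ≤ ENNReal.ofReal (A + ((k : ℝ) + 1) * L) := by
        intro w hw
        have hnb : w ∉ B (k + 1) := hw.2
        have hd : csep * al ^ (k + 1) ≤ dist w z := by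
          have := not_lt.mp (fun hc => hnb (Metric.mem_ball.mpr hc))
          exact this
        have hr : 0 < csep * al ^ (k + 1) := by positivity
        have hpos : 0 < dist w z := lt_of_lt_of_le hr hd
        have hdz : ‖z - w‖ = dist w z := by
          rw [← Complex.dist_eq, dist_comm]
        apply ENNReal.ofReal_le_ofReal
        have h1 : (1 : ℝ) / dist w z ≤ 1 / (csep * al ^ (k + 1)) :=
          one_div_le_one_div_of_le hr hd
        calc f w = Real.log (1 / dist w z) := by rw [hf]; simp [hdz]
          _ ≤ Real.log (1 / (csep * al ^ (k + 1))) := Real.log_le_log (by positivity) h1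
          _ = -(Real.log csep + ((k : ℝ) + 1) * Real.log al) := by
              rw [one_div, Real.log_inv, Real.log_mul hcsep.ne' (by positivity),
                Real.log_pow]
              push_cast
              ring
          _ ≤ A + ((k : ℝ) + 1) * L := by
              have h2 : -Real.log csep ≤ A := neg_le_abs _
              rw [hL]
              ring_nf
              nlinarith [h2]
      have hmes : ν (F (k + 3)) ≤ ENNReal.ofReal (β ^ k) := by
        have hsub : F (k + 3) ⊆ X ∩ B k := Set.diff_subset
        exact le_trans (measure_mono hsub) (hkey z hz k)
      calc ∫⁻ w in F (k + 3), g w ∂ν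
          ≤ ENNReal.ofReal (A + ((k : ℝ) + 1) * L) * ν (F (k + 3)) :=
            setLIntegral_le_of_bound (hFmeas (k + 3)) g _ hb
        _ ≤ ENNReal.ofReal (A + ((k : ℝ) + 1) * L) * ENNReal.ofReal (β ^ k) :=
            mul_le_mul_right hmes _
        _ = ENNReal.ofReal ((A + ((k : ℝ) + 1) * L) * β ^ k) := by
            rw [← ENNReal.ofReal_mul (by positivity)]
    -- assemble
    have hmain : ∫⁻ w, g w ∂ν ≤ ENNReal.ofReal (A + S) := by
      have hstep : ∫⁻ w, g w ∂ν ≤ ∑' n, ∫⁻ w in F n, g w ∂ν := by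
        calc ∫⁻ w, g w ∂ν = ∫⁻ w in Set.univ, g w ∂ν := (setLIntegral_univ _).symm
          _ ≤ ∫⁻ w in ⋃ n, F n, g w ∂ν := lintegral_mono_set hcoverF
          _ ≤ ∑' n, ∫⁻ w in F n, g w ∂ν := lintegral_iUnion_le _ _
      set u : ℕ → ENNReal := fun n => ∫⁻ w in F n, g w ∂ν with hu
      have hsplit : ∑' n, u n = u 0 + (u 1 + (u 2 + ∑' k, u (k + 3))) := by
        rw [tsum_eq_zero_add' ENNReal.summable, tsum_eq_zero_add' ENNReal.summable,
          tsum_eq_zero_add' ENNReal.summable]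
        rfl
      have htail : ∑' k, u (k + 3) ≤ ENNReal.ofReal S := by
        calc ∑' k, u (k + 3)
            ≤ ∑' k : ℕ, ENNReal.ofReal ((A + ((k : ℝ) + 1) * L) * β ^ k) :=
              ENNReal.tsum_le_tsum hu3
          _ = ENNReal.ofReal S := (ENNReal.ofReal_tsum_of_nonneg hCnn hsumm).symm
      calc ∫⁻ w, g w ∂ν ≤ ∑' n, u n := hstep
        _ = u 0 + (u 1 + (u 2 + ∑' k, u (k + 3))) := hsplit
        _ ≤ 0 + (ENNReal.ofReal A + (0 + ENNReal.ofReal S)) := by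
            apply add_le_add hu0.le
            apply add_le_add hu1
            exact add_le_add hu2.le htail
        _ = ENNReal.ofReal A + ENNReal.ofReal S := by rw [zero_add, zero_add]
        _ = ENNReal.ofReal (A + S) := (ENNReal.ofReal_add hA0 hS0).symm
    -- convert to the Bochner integral
    have hfm : Measurable f := by
      have h1 : Measurable fun w : ℂ => ‖z - w‖ :=
        (continuous_norm.comp (continuous_const.sub continuous_id)).measurable
      exact Real.measurable_log.comp (measurable_const.div h1)
    have hnn : 0 ≤ᶠ[ae ν] f := by
      filter_upwards [haeX] with w hw
      rcases eq_or_ne (‖z - w‖) 0 with h0 | h0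
      · rw [hf]; simp [h0]
      · have hpos : 0 < ‖z - w‖ := lt_of_le_of_ne (norm_nonneg _) (Ne.symm h0)
        apply Real.log_nonneg
        exact one_le_one_div hpos (habs_le_one z hz w hw)
    have heq : logPotential ν z = (∫⁻ w, g w ∂ν).toReal := by
      rw [logPotential]
      exact integral_eq_lintegral_of_nonneg_ae hnn hfm.aestronglyMeasurable
    rw [heq]
    exact ENNReal.toReal_le_of_le_ofReal hI₀0 hmain
  -- energy bound
  have henergy : logEnergy ν ≤ A + S := by
    have hae : logPotential ν ≤ᶠ[ae ν] fun _ => A + S := by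
      filter_upwards [haeX] with zz hzz
      exact hpot zz hzz
    by_cases hint : Integrable (logPotential ν) ν
    · calc logEnergy ν = ∫ zz, logPotential ν zz ∂ν := rfl
        _ ≤ ∫ _, (A + S) ∂ν := integral_mono_ae hint (integrable_const _) hae
        _ = A + S := by simp [measure_univ]
    · rw [logEnergy, integral_undef hint]
      exact hI₀0
  -- capacity bound
  have hEnergyNonneg : ∀ (μ : Measure ℂ), μ Xᶜ = 0 → 0 ≤ logEnergy μ := by
    intro μ hμ
    have haeXμ : ∀ᵐ w ∂μ, w ∈ X := by rw [MeasureTheory.ae_iff]; exact hμ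
    apply integral_nonneg_of_ae
    filter_upwards [haeXμ] with zz hzz
    apply integral_nonneg_of_ae
    filter_upwards [haeXμ] with w hw
    rcases eq_or_ne (‖zz - w‖) 0 with h0 | h0
    · simp [h0]
    · have hpos : 0 < ‖zz - w‖ := lt_of_le_of_ne (norm_nonneg _) (Ne.symm h0)
      apply Real.log_nonneg
      exact one_le_one_div hpos (habs_le_one zz hzz w hw)
  have hbdd : BddAbove {c : ℝ | ∃ μ : Measure ℂ, IsProbabilityMeasure μ ∧ μ Xᶜ = 0 ∧
      c = Real.exp (-(logEnergy μ))} := by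
    refine ⟨1, fun c hc => ?_⟩
    obtain ⟨μ, _, hμn, rfl⟩ := hc
    calc Real.exp (-(logEnergy μ)) ≤ Real.exp (-0) :=
          Real.exp_le_exp.mpr (neg_le_neg (hEnergyNonneg μ hμn))
      _ = 1 := by simp
  have hmem : Real.exp (-(logEnergy ν)) ∈ {c : ℝ | ∃ μ : Measure ℂ, IsProbabilityMeasure μ ∧
      μ Xᶜ = 0 ∧ c = Real.exp (-(logEnergy μ))} := ⟨ν, hprob, hnull, rfl⟩
  have hcap : Real.exp (-(A + S)) ≤ logCapacity X := by
    have h1 : Real.exp (-(A + S)) ≤ Real.exp (-(logEnergy ν)) :=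
      Real.exp_le_exp.mpr (neg_le_neg henergy)
    exact h1.trans (le_csSup hbdd hmem)
  exact ⟨hpot, hcap, hcap⟩
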